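/- Let F₁,…,F₅ be pairwise non-proportional linear forms in ℂ[x,y,z], and for each i let Gᵢ = (F₁⋯F₅)/Fᵢ. Then every degree-1 syzygy (L₁,…,L₅) ∈ (S₁)⁵ with L₁G₁+⋯+L₅G₅ = 0 satisfies Fᵢ ∣ Lᵢ for all i; consequently the space of degree-1 syzygies of (G₁,…,G₅) has dimension exactly 4. -/

import Mathlib

open MvPolynomial Finset

private abbrev P3 := MvPolynomial (Fin 3) ℂ

private lemma deg_sum_eq (d : Fin 3 →₀ ℕ) : (d.sum fun _ e => e) = d.degree := rfl

private lemma fdegree_add (d e : Fin 3 →₀ ℕ) : (d + e).degree = d.degree + e.degree := by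
  simp only [Finsupp.degree_eq_weight_one]
  exact map_add _ d e

private lemma top_component_ne_zero (a b : P3) (ha : a ≠ 0) (hb : b ≠ 0) :
    homogeneousComponent (a.totalDegree + b.totalDegree) (a * b) ≠ 0 := by
  classical
  set m := a.totalDegree with hm
  set k := b.totalDegree with hk
  set at' := homogeneousComponent m a with hat'
  set bt := homogeneousComponent k b with hbt'
  have hat : at'.IsHomogeneous m := homogeneousComponent_isHomogeneous m a
  have hbt : bt.IsHomogeneous k := homogeneousComponent_isHomogeneous k b
  have htop : ∀ (p : P3), p ≠ 0 → homogeneousComponent p.totalDegree p ≠ 0 := by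
    intro p hp
    obtain ⟨d, hd, hdeg⟩ := Finset.exists_mem_eq_sup p.support
      (support_nonempty.2 hp) (fun s => s.sum fun _ e => e)
    intro h
    have hc : coeff d (homogeneousComponent p.totalDegree p) = coeff d p := by
      rw [coeff_homogeneousComponent, if_pos]
      rw [← deg_sum_eq]; exact hdeg.symm
    rw [h, coeff_zero] at hc
    exact (mem_support_iff.1 hd) hc.symm
  have hane : at' ≠ 0 := htop a ha
  have hbne : bt ≠ 0 := htop b hb
  -- supports
  have hsupp_r : ∀ u : Fin 3 →₀ ℕ, u ∈ (a - at').support → u.degree < m ∧ True := by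
    intro u hu
    have hcu : coeff u (a - at') ≠ 0 := mem_support_iff.1 hu
    rw [coeff_sub, hat', coeff_homogeneousComponent] at hcu
    by_cases hdu : u.degree = m
    · simp [hdu] at hcu
    · have hua : u ∈ a.support := by
        by_contra h
        simp [mem_support_iff, not_not] at h
        simp [h, hdu] at hcu
      have : u.degree ≤ m := by rw [← deg_sum_eq]; exact le_totalDegree hua
      exact ⟨lt_of_le_of_ne this hdu, trivial⟩
  have hsupp_rb : ∀ u : Fin 3 →₀ ℕ, u ∈ (b - bt).support → u.degree < k := by
    intro u hu
    have hcu : coeff u (b - bt) ≠ 0 := mem_support_iff.1 hu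
    rw [coeff_sub, hbt', coeff_homogeneousComponent] at hcu
    by_cases hdu : u.degree = k
    · simp [hdu] at hcu
    · have hub : u ∈ b.support := by
        by_contra h
        simp [mem_support_iff, not_not] at h
        simp [h, hdu] at hcu
      have : u.degree ≤ k := by rw [← deg_sum_eq]; exact le_totalDegree hub
      exact lt_of_le_of_ne this hdu
  have hsupp_at : ∀ u : Fin 3 →₀ ℕ, u ∈ at'.support → u.degree = m := by
    intro u hu
    have hcu : coeff u at' ≠ 0 := mem_support_iff.1 hu
    rw [hat', coeff_homogeneousComponent] at hcu
    by_contra h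
    simp [h] at hcu
  have key : homogeneousComponent (m + k) (a * b) = at' * bt := by
    have hsplit : a * b = at' * bt + ((a - at') * b + at' * (b - bt)) := by ring
    rw [hsplit, map_add, map_add]
    have h1 : homogeneousComponent (m + k) (at' * bt) = at' * bt := by
      rw [homogeneousComponent_of_mem ((mem_homogeneousSubmodule _ _).2 (hat.mul hbt)),
        if_pos rfl]
    have h2 : homogeneousComponent (m + k) ((a - at') * b) = 0 := by
      apply homogeneousComponent_eq_zero'
      intro d hd
      have := MvPolynomial.support_mul (a - at') b hd
      rw [Finset.mem_add] at this
      obtain ⟨u, hu, v, hv, rfl⟩ := this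
      have h1 := (hsupp_r u hu).1
      have h2 : v.degree ≤ k := by rw [← deg_sum_eq]; exact le_totalDegree hv
      rw [fdegree_add]; omega
    have h3 : homogeneousComponent (m + k) (at' * (b - bt)) = 0 := by
      apply homogeneousComponent_eq_zero'
      intro d hd
      have := MvPolynomial.support_mul at' (b - bt) hd
      rw [Finset.mem_add] at this
      obtain ⟨u, hu, v, hv, rfl⟩ := this
      have h1 := hsupp_at u hu
      have h2 := hsupp_rb v hv
      rw [fdegree_add]; omega
    rw [h1, h2, h3, add_zero, add_zero]
  rw [key]
  exact mul_ne_zero hane hbne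

private lemma totalDegree_add_of_homog (a b : P3) (n : ℕ) (h : (a * b).IsHomogeneous n)
    (h0 : a * b ≠ 0) : a.totalDegree + b.totalDegree = n := by
  have ha : a ≠ 0 := left_ne_zero_of_mul h0
  have hb : b ≠ 0 := right_ne_zero_of_mul h0
  by_contra hne
  apply top_component_ne_zero a b ha hb
  rw [homogeneousComponent_of_mem ((mem_homogeneousSubmodule _ _).2 h), if_neg hne]

private lemma eq_C_of_tdeg_zero (a : P3) (h : a.totalDegree = 0) : a = C (coeff 0 a) := by
  have h1 : a.IsHomogeneous 0 := (totalDegree_zero_iff_isHomogeneous _).1 h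
  have h2 := homogeneousComponent_of_mem (m := 0) ((mem_homogeneousSubmodule _ _).2 h1)
  rw [if_pos rfl] at h2
  rw [← homogeneousComponent_zero]; exact h2.symm

private lemma prime_of_homog1 (F : P3) (h1 : F.IsHomogeneous 1) (h0 : F ≠ 0) : Prime F := by
  rw [← UniqueFactorizationMonoid.irreducible_iff_prime]
  constructor
  · intro hu
    obtain ⟨v, hv⟩ := hu.exists_right_inv
    have h2 := totalDegree_add_of_homog F v 0 (by rw [hv]; exact isHomogeneous_one _ _)
      (by rw [hv]; exact one_ne_zero)
    have hF : F.totalDegree = 1 := h1.totalDegree h0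
    omega
  · intro a b hab
    have hne : a * b ≠ 0 := by rw [← hab]; exact h0
    have hsum := totalDegree_add_of_homog a b 1 (by rw [← hab]; exact h1) hne
    have hcase : a.totalDegree = 0 ∨ b.totalDegree = 0 := by omega
    rcases hcase with h | h
    · left
      have ha : a ≠ 0 := left_ne_zero_of_mul hne
      have := eq_C_of_tdeg_zero a h
      have hc : coeff 0 a ≠ 0 := fun hc => ha (by rw [this, hc, map_zero])
      rw [this]
      exact (isUnit_iff_ne_zero.2 hc).map C
    · right
      have hb : b ≠ 0 := right_ne_zero_of_mul hne
      have := eq_C_of_tdeg_zero b h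
      have hc : coeff 0 b ≠ 0 := fun hc => hb (by rw [this, hc, map_zero])
      rw [this]
      exact (isUnit_iff_ne_zero.2 hc).map C

private lemma exists_smul_of_dvd (F L : P3) (hF1 : F.IsHomogeneous 1) (hF0 : F ≠ 0)
    (hL : L.IsHomogeneous 1) (h : F ∣ L) : ∃ c : ℂ, L = c • F := by
  obtain ⟨q, rfl⟩ := h
  rcases eq_or_ne q 0 with rfl | hq
  · exact ⟨0, by simp⟩
  have h0 : F * q ≠ 0 := mul_ne_zero hF0 hq
  have hsum := totalDegree_add_of_homog F q 1 hL h0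
  have hFt : F.totalDegree = 1 := hF1.totalDegree hF0
  have hqt : q.totalDegree = 0 := by omega
  obtain ⟨c, hc⟩ : ∃ c : ℂ, q = C c := ⟨_, eq_C_of_tdeg_zero q hqt⟩
  refine ⟨c, ?_⟩
  rw [hc, smul_eq_C_mul]
  ring

set_option maxHeartbeats 1000000 in
set_option synthInstance.maxHeartbeats 400000 in
/-- If `F₁,…,F₅` are pairwise non-proportional linear forms in `ℂ[x,y,z]` and
`Gᵢ = (F₁⋯F₅)/Fᵢ`, then every degree-1 syzygy `(L₁,…,L₅)` of `(G₁,…,G₅)` satisfies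
`Fᵢ ∣ Lᵢ` for all `i`, and the space of degree-1 syzygies has dimension exactly 4. -/
theorem degree_one_syzygies
    (F G : Fin 5 → MvPolynomial (Fin 3) ℂ)
    (hF1 : ∀ i, (F i).IsHomogeneous 1) (hF0 : ∀ i, F i ≠ 0)
    (hFdist : ∀ i j, i ≠ j → ∀ c : ℂ, F j ≠ c • F i)
    (hG : ∀ i, G i = ∏ j ∈ Finset.univ.erase i, F j) :
    (∀ L : Fin 5 → ↥(homogeneousSubmodule (Fin 3) ℂ 1),
        (∑ i, (L i : MvPolynomial (Fin 3) ℂ) * G i) = 0 → ∀ i, F i ∣ (L i : MvPolynomial (Fin 3) ℂ)) ∧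
    Module.finrank ℂ
      ↥(LinearMap.ker
        (∑ i : Fin 5,
          (LinearMap.mulRight ℂ (G i)).comp
            (((MvPolynomial.homogeneousSubmodule (Fin 3) ℂ 1).subtype).comp
              (LinearMap.proj (R := ℂ) i)))) = 4 := by
  classical
  have part1 : ∀ L : Fin 5 → ↥(homogeneousSubmodule (Fin 3) ℂ 1),
      (∑ i, (L i : MvPolynomial (Fin 3) ℂ) * G i) = 0 →
      ∀ i, F i ∣ (L i : MvPolynomial (Fin 3) ℂ) := by
    intro L hL i
    have hprime := prime_of_homog1 (F i) (hF1 i) (hF0 i)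
    have hdvd_sum : F i ∣ (L i : MvPolynomial (Fin 3) ℂ) * G i := by
      have h1 : (L i : MvPolynomial (Fin 3) ℂ) * G i
          = - ∑ j ∈ Finset.univ.erase i, (L j : MvPolynomial (Fin 3) ℂ) * G j := by
        rw [eq_neg_iff_add_eq_zero, ← hL, ← Finset.add_sum_erase _ _ (Finset.mem_univ i)]
      rw [h1, dvd_neg]
      apply Finset.dvd_sum
      intro j hj
      have hji : j ≠ i := (Finset.mem_erase.1 hj).1
      apply Dvd.dvd.mul_left
      rw [hG j]
      exact Finset.dvd_prod_of_mem _ (Finset.mem_erase.2 ⟨hji.symm, Finset.mem_univ i⟩)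
    rcases hprime.2.2 _ _ hdvd_sum with h | h
    · exact h
    · exfalso
      rw [hG i] at h
      obtain ⟨j, hj, hdvd⟩ := (hprime.dvd_finset_prod_iff _).1 h
      have hji : j ≠ i := (Finset.mem_erase.1 hj).1
      obtain ⟨c, hc⟩ := exists_smul_of_dvd (F i) (F j) (hF1 i) (hF0 i) (hF1 j) hdvd
      exact hFdist i j hji.symm c hc
  refine ⟨part1, ?_⟩
  set T : (Fin 5 → ↥(homogeneousSubmodule (Fin 3) ℂ 1)) →ₗ[ℂ] MvPolynomial (Fin 3) ℂ :=
    ∑ i : Fin 5,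
      (LinearMap.mulRight ℂ (G i)).comp
        (((MvPolynomial.homogeneousSubmodule (Fin 3) ℂ 1).subtype).comp
          (LinearMap.proj (R := ℂ) i)) with hTdef
  have hTapp : ∀ L : Fin 5 → ↥(homogeneousSubmodule (Fin 3) ℂ 1),
      T L = ∑ i, (L i : MvPolynomial (Fin 3) ℂ) * G i := by
    intro L
    simp [hTdef, LinearMap.sum_apply, LinearMap.comp_apply, LinearMap.mulRight_apply,
      LinearMap.proj_apply, Submodule.subtype_apply]
  set P : MvPolynomial (Fin 3) ℂ := ∏ j : Fin 5, F j with hPdef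
  have hP0 : P ≠ 0 := Finset.prod_ne_zero_iff.2 fun j _ => hF0 j
  have hFG : ∀ i, F i * G i = P := by
    intro i
    rw [hG i, hPdef]
    exact Finset.mul_prod_erase _ _ (Finset.mem_univ i)
  set σs : (Fin 5 → ℂ) →ₗ[ℂ] ℂ := ∑ i : Fin 5, LinearMap.proj i with hσdef
  have hσapp : ∀ c : Fin 5 → ℂ, σs c = ∑ i, c i := by
    intro c
    simp [hσdef, LinearMap.sum_apply, LinearMap.proj_apply]
  -- the map from coefficient vectors to syzygies
  have hmem : ∀ c : Fin 5 → ℂ, c ∈ LinearMap.ker σs →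
      (fun i => c i • (⟨F i, hF1 i⟩ : ↥(homogeneousSubmodule (Fin 3) ℂ 1))) ∈ LinearMap.ker T := by
    intro c hc
    rw [LinearMap.mem_ker, hTapp]
    have : ∀ i : Fin 5,
        ((c i • (⟨F i, hF1 i⟩ : ↥(homogeneousSubmodule (Fin 3) ℂ 1)) :
          ↥(homogeneousSubmodule (Fin 3) ℂ 1)) : MvPolynomial (Fin 3) ℂ) * G i = c i • P := by
      intro i
      rw [Submodule.coe_smul, smul_mul_assoc, hFG i]
    rw [Finset.sum_congr rfl fun i _ => this i, ← Finset.sum_smul]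
    rw [LinearMap.mem_ker, hσapp] at hc
    rw [hc, zero_smul]
  let g : (Fin 5 → ℂ) →ₗ[ℂ] (Fin 5 → ↥(homogeneousSubmodule (Fin 3) ℂ 1)) :=
    LinearMap.pi fun i =>
      (LinearMap.toSpanSingleton ℂ _ (⟨F i, hF1 i⟩ : ↥(homogeneousSubmodule (Fin 3) ℂ 1))).comp
        (LinearMap.proj i)
  have hgapp : ∀ c : Fin 5 → ℂ, g c = fun i => c i • ⟨F i, hF1 i⟩ := fun c => rfl
  let f : ↥(LinearMap.ker σs) →ₗ[ℂ] ↥(LinearMap.ker T) :=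
    (g.comp (LinearMap.ker σs).subtype).codRestrict (LinearMap.ker T)
      (fun c => by rw [LinearMap.comp_apply, Submodule.subtype_apply, hgapp]; exact hmem c.1 c.2)
  have hbij : Function.Bijective f := by
    constructor
    · intro c d hcd
      apply Subtype.ext
      funext i
      have h1 := congrArg Subtype.val (congrFun (congrArg Subtype.val hcd) i)
      have h2 : c.1 i • F i = d.1 i • F i := h1
      have h3 : (c.1 i - d.1 i) • F i = 0 := by rw [sub_smul, h2, sub_self]
      rcases smul_eq_zero.1 h3 with h | h
      · exact sub_eq_zero.1 h
      · exact absurd h (hF0 i)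
    · rintro ⟨L, hL⟩
      have hL' : (∑ i, (L i : MvPolynomial (Fin 3) ℂ) * G i) = 0 := by
        rw [← hTapp]; exact hL
      have hdvd := part1 L hL'
      have hex : ∀ i, ∃ c : ℂ, (L i : MvPolynomial (Fin 3) ℂ) = c • F i := fun i =>
        exists_smul_of_dvd (F i) (L i) (hF1 i) (hF0 i)
          ((mem_homogeneousSubmodule _ _).1 (L i).2) (hdvd i)
      choose c hc using hex
      have hsum : (∑ i, c i) = 0 := by
        have : (∑ i, c i) • P = 0 := by
          rw [Finset.sum_smul, ← hL']
          refine Finset.sum_congr rfl fun i _ => ?_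
          rw [hc i, smul_mul_assoc, hFG i]
        rcases smul_eq_zero.1 this with h | h
        · exact h
        · exact absurd h hP0
      refine ⟨⟨c, by rw [LinearMap.mem_ker, hσapp]; exact hsum⟩, ?_⟩
      apply Subtype.ext
      funext i
      apply Subtype.ext
      show c i • F i = (L i : MvPolynomial (Fin 3) ℂ)
      exact (hc i).symm
  have heq : Module.finrank ℂ ↥(LinearMap.ker σs) = Module.finrank ℂ ↥(LinearMap.ker T) :=
    (LinearEquiv.ofBijective f hbij).finrank_eq
  rw [← heq]
  -- finrank of the kernel of the sum functional
  have hsurj : Function.Surjective σs := by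
    intro x
    refine ⟨Pi.single 0 x, ?_⟩
    rw [hσapp]
    simp
  have hrank := LinearMap.finrank_range_add_finrank_ker σs
  rw [LinearMap.range_eq_top.2 hsurj] at hrank
  have h5 : Module.finrank ℂ (Fin 5 → ℂ) = 5 := by simp
  have h1 : Module.finrank ℂ ↥(⊤ : Submodule ℂ ℂ) = 1 := by simp
  omega
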